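/- Let (v, a) be a product two-action game with m players and let 1 ≤ l ≤ m. Then the number of Nash equilibria γ ∈ [0,1]^m with exactly l coordinates in {0,1} is at most binom(m,l)·2^{l−1}·!(m−l); and if the game is maximal, this number equals binom(m,l)·2^{l−1}·!(m−l). -/

import Mathlib

open Finset
open scoped Classical

/-- `λ^i(γ) = (−1)^{v_i} · ∏_{j ≠ i} (γ_j − a^i_j)` for a product two-action game. -/
def lamP {m : ℕ} (v : Fin m → ℕ) (a : Fin m → Fin m → ℝ) (i : Fin m) (γ : Fin m → ℝ) : ℝ :=
  (-1 : ℝ) ^ (v i) * ∏ j ∈ Finset.univ.erase i, (γ j - a i j)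

/-- `γ ∈ [0,1]^m`. -/
def InCube {m : ℕ} (γ : Fin m → ℝ) : Prop := ∀ i, 0 ≤ γ i ∧ γ i ≤ 1

/-- Equilibrium candidate: `λ^i(γ) = 0` for every `i` with `0 < γ_i < 1`. -/
def IsEqCand {m : ℕ} (v : Fin m → ℕ) (a : Fin m → Fin m → ℝ) (γ : Fin m → ℝ) : Prop :=
  InCube γ ∧ ∀ i, 0 < γ i → γ i < 1 → lamP v a i γ = 0

/-- Nash equilibrium of the product two-action game. -/
def IsNashP {m : ℕ} (v : Fin m → ℕ) (a : Fin m → Fin m → ℝ) (γ : Fin m → ℝ) : Prop :=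
  IsEqCand v a γ ∧ (∀ i, γ i = 0 → lamP v a i γ ≤ 0) ∧ (∀ i, γ i = 1 → 0 ≤ lamP v a i γ)

/-- The coefficient conditions of a product two-action game:
`a^i_j ∈ (0,1)` and `a^{i₁}_j ≠ a^{i₂}_j` for distinct `i₁, i₂ ≠ j`. -/
def GoodCoef {m : ℕ} (a : Fin m → Fin m → ℝ) : Prop :=
  (∀ i j : Fin m, i ≠ j → 0 < a i j ∧ a i j < 1) ∧
  (∀ j i₁ i₂ : Fin m, i₁ ≠ j → i₂ ≠ j → i₁ ≠ i₂ → a i₁ j ≠ a i₂ j)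

/-- `EC(π)`. -/
def ECset {m : ℕ} (a : Fin m → Fin m → ℝ) (π : Equiv.Perm (Fin m)) : Set (Fin m → ℝ) :=
  {γ | InCube γ ∧ (∀ i, π i = i → (γ i = 0 ∨ γ i = 1)) ∧ (∀ j, π j ≠ j → γ j = a (π j) j)}

/-- `|F(π)|`, the number of fixed points of `π`. -/
def fixedCard {m : ℕ} (π : Equiv.Perm (Fin m)) : ℕ :=
  (Finset.univ.filter fun i => π i = i).card

/-- `V(m) = Σ_{l=0}^m binom(m,l)·2^l·!(m−l)`. -/
def Vnum (m : ℕ) : ℕ :=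
  ∑ l ∈ Finset.range (m + 1), Nat.choose m l * 2 ^ l * numDerangements (m - l)

/-- `σj` is the `j`-th associated permutation: it fixes `j` and sorts the
`a^i_j` (`i ≠ j`) decreasingly. -/
def IsAssoc {m : ℕ} (a : Fin m → Fin m → ℝ) (j : Fin m) (σj : Equiv.Perm (Fin m)) : Prop :=
  σj j = j ∧ ∀ i₁ i₂ : Fin m, i₁ ≠ j → i₂ ≠ j → i₁ ≠ i₂ → (σj i₁ < σj i₂ ↔ a i₂ j < a i₁ j)

/-- The increment `Inc(γ,i)` of an equilibrium candidate `γ ∈ EC(π)` at `i ∈ F(π)`. -/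
noncomputable def IncMap {m : ℕ} (v : Fin m → ℕ) (σ : Fin m → Equiv.Perm (Fin m))
    (π : Equiv.Perm (Fin m)) (γ : Fin m → ℝ) (i : Fin m) : ℕ :=
  (1 + (if γ i = 1 then 1 else 0) + v i
    + (Finset.univ.filter fun k => π k = k ∧ k ≠ i ∧ γ k = 0).card
    + ∑ j ∈ Finset.univ.filter (fun j => π j ≠ j),
        (if (σ j) i ≤ (σ j) (π j) then 1 else 0)) % 2

/-- `g(π)`: the equilibrium candidate in `EC(π)` with `γ_i = 1` for all `i ∈ F(π)`. -/
noncomputable def gP {m : ℕ} (a : Fin m → Fin m → ℝ) (π : Equiv.Perm (Fin m)) : Fin m → ℝ :=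
  fun j => if π j = j then 1 else a (π j) j

/-- A product two-action game is maximal if for every permutation `π` with
`F(π) ≠ ∅` exactly `2^{|F(π)|−1}` elements of `EC(π)` are Nash equilibria. -/
def IsMaximal {m : ℕ} (v : Fin m → ℕ) (a : Fin m → Fin m → ℝ) : Prop :=
  ∀ π : Equiv.Perm (Fin m), (∃ i, π i = i) →
    {γ ∈ ECset a π | IsNashP v a γ}.ncard = 2 ^ (fixedCard π - 1)

/-- `χ(a,b) = 1` iff `a ≥ b` (on naturals). -/
def chiN (x y : ℕ) : ℕ := if y ≤ x then 1 else 0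

/-- The permutation `δ^i` of `{1,…,m}`. -/
def deltaFun (m i j : ℕ) : ℕ :=
  if j = i then i
  else if j < i then m - i + j + chiN (m - i + j) i
  else j - i + chiN (j - i) i

section Aux

variable {m : ℕ} {v : Fin m → ℕ} {a : Fin m → Fin m → ℝ}

/-- λ^k(γ) ≠ 0 for γ ∈ EC(π) and k a fixed point of π. -/
lemma lam_ne_zero (ha : GoodCoef a) {π : Equiv.Perm (Fin m)} {γ : Fin m → ℝ}
    (hγ : γ ∈ ECset a π) {k : Fin m} (hk : π k = k) : lamP v a k γ ≠ 0 := by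
  obtain ⟨hcube, hfix, hmove⟩ := hγ
  unfold lamP
  apply mul_ne_zero (pow_ne_zero _ (by norm_num))
  rw [Finset.prod_ne_zero_iff]
  intro j hj
  have hjk : j ≠ k := Finset.ne_of_mem_erase hj
  rw [sub_ne_zero]
  by_cases hpj : π j = j
  · have hb := hfix j hpj
    have hkj := ha.1 k j (Ne.symm hjk)
    rcases hb with h0 | h1
    · rw [h0]; exact fun h => absurd h.symm (ne_of_gt hkj.1)
    · rw [h1]; exact fun h => absurd h.symm (ne_of_lt hkj.2)
  · rw [hmove j hpj]
    have hpjk : π j ≠ k := by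
      intro h; exact hpj (π.injective (h.trans hk.symm) ▸ (h.trans hk.symm ▸ h))
    exact ha.2 j (π j) k hpj (Ne.symm hjk) hpjk

/-- A point determines its permutation. -/
lemma EC_unique (ha : GoodCoef a) {π₁ π₂ : Equiv.Perm (Fin m)} {γ : Fin m → ℝ}
    (h₁ : γ ∈ ECset a π₁) (h₂ : γ ∈ ECset a π₂) : π₁ = π₂ := by
  obtain ⟨hc₁, hfix₁, hmove₁⟩ := h₁
  obtain ⟨hc₂, hfix₂, hmove₂⟩ := h₂
  ext j
  by_cases h1 : π₁ j = j <;> by_cases h2 : π₂ j = j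
  · rw [h1, h2]
  · exfalso
    have hb := hfix₁ j h1
    have := hmove₂ j h2
    have hio := ha.1 (π₂ j) j h2
    rcases hb with h0 | h0 <;> rw [h0] at this
    · exact absurd this.symm (ne_of_gt hio.1)
    · exact absurd this.symm (ne_of_lt hio.2)
  · exfalso
    have hb := hfix₂ j h2
    have := hmove₁ j h1
    have hio := ha.1 (π₁ j) j h1
    rcases hb with h0 | h0 <;> rw [h0] at this
    · exact absurd this.symm (ne_of_gt hio.1)
    · exact absurd this.symm (ne_of_lt hio.2)
  · have heq : π₁ j = π₂ j := by
      by_contra hne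
      exact ha.2 j (π₁ j) (π₂ j) h1 h2 hne ((hmove₁ j h1).symm.trans (hmove₂ j h2))
    rw [heq]

/-- The fixed point set of π equals the set of binary coordinates of γ ∈ EC(π). -/
lemma EC_binary_eq_fixed (ha : GoodCoef a) {π : Equiv.Perm (Fin m)} {γ : Fin m → ℝ}
    (hγ : γ ∈ ECset a π) :
    (Finset.univ.filter fun i => γ i = 0 ∨ γ i = 1) =
      (Finset.univ.filter fun i => π i = i) := by
  obtain ⟨hcube, hfix, hmove⟩ := hγ
  ext i
  simp only [Finset.mem_filter, Finset.mem_univ, true_and]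
  constructor
  · intro hb
    by_contra hne
    have := hmove i hne
    have hio := ha.1 (π i) i hne
    rcases hb with h0 | h0 <;> rw [h0] at this
    · exact absurd this.symm (ne_of_gt hio.1)
    · exact absurd this.symm (ne_of_lt hio.2)
  · exact hfix i

/-- Every equilibrium candidate lies in some EC(π). -/
lemma exists_EC (ha : GoodCoef a) {γ : Fin m → ℝ} (h : IsEqCand v a γ) :
    ∃ π, γ ∈ ECset a π := by
  obtain ⟨hcube, hlam⟩ := h
  have key : ∀ i : Fin m, ∃ j : Fin m,
      ((0 < γ i ∧ γ i < 1) → (j ≠ i ∧ γ j = a i j)) ∧ (¬(0 < γ i ∧ γ i < 1) → j = i) := by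
    intro i
    by_cases hint : 0 < γ i ∧ γ i < 1
    · have h0 := hlam i hint.1 hint.2
      unfold lamP at h0
      rcases mul_eq_zero.mp h0 with hp | hp
      · exact absurd hp (pow_ne_zero _ (by norm_num))
      · obtain ⟨j, hj, hj0⟩ := Finset.prod_eq_zero_iff.mp hp
        exact ⟨j, fun _ => ⟨Finset.ne_of_mem_erase hj, by linarith [sub_eq_zero.mp hj0]⟩,
          fun hc => absurd hint hc⟩
    · exact ⟨i, fun hc => absurd hc hint, fun _ => rfl⟩
  choose f hf1 hf2 using key
  have hint_f : ∀ i, (0 < γ i ∧ γ i < 1) → 0 < γ (f i) ∧ γ (f i) < 1 := by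
    intro i hi
    obtain ⟨hne, heq⟩ := hf1 i hi
    have := ha.1 i (f i) (Ne.symm hne)
    rw [heq]; exact this
  have hinj : Function.Injective f := by
    intro i₁ i₂ heq
    by_cases h1 : 0 < γ i₁ ∧ γ i₁ < 1 <;> by_cases h2 : 0 < γ i₂ ∧ γ i₂ < 1
    · by_contra hne
      obtain ⟨hn1, he1⟩ := hf1 i₁ h1
      obtain ⟨hn2, he2⟩ := hf1 i₂ h2
      exact ha.2 (f i₁) i₁ i₂ (Ne.symm hn1) (Ne.symm (heq ▸ hn2)) hne
        (he1.symm.trans (heq ▸ he2 : γ (f i₁) = a i₂ (f i₁)))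
    · exfalso
      have := hint_f i₁ h1
      rw [heq, hf2 i₂ h2] at this
      exact h2 this
    · exfalso
      have := hint_f i₂ h2
      rw [← heq, hf2 i₁ h1] at this
      exact h1 this
    · rw [hf2 i₁ h1, hf2 i₂ h2] at heq; exact heq
  have hbij : Function.Bijective f := Finite.injective_iff_bijective.mp hinj
  refine ⟨(Equiv.ofBijective f hbij).symm, hcube, ?_, ?_⟩
  · intro i hi
    have hfi : f i = i := ((Equiv.symm_apply_eq (Equiv.ofBijective f hbij)).mp hi).symm
    have hni : ¬(0 < γ i ∧ γ i < 1) := by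
      intro hc
      exact (hf1 i hc).1 hfi
    have hc := hcube i
    rcases lt_or_ge 0 (γ i) with h0 | h0
    · right
      rcases lt_or_ge (γ i) 1 with h1 | h1
      · exact absurd ⟨h0, h1⟩ hni
      · linarith [hc.2]
    · left; linarith [hc.1]
  · intro j hj
    set i := (Equiv.ofBijective f hbij).symm j with hi
    have hfij : f i = j := Equiv.apply_symm_apply (Equiv.ofBijective f hbij) j
    have hint : 0 < γ i ∧ γ i < 1 := by
      by_contra hc
      exact hj ((hf2 i hc).symm.trans hfij)
    have h2 := (hf1 i hint).2
    rw [hfij] at h2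
    exact h2

/-- EC(π) is finite. -/
lemma EC_finite (π : Equiv.Perm (Fin m)) : (ECset a π).Finite := by
  classical
  set ψ : ({i : Fin m // π i = i} → Bool) → (Fin m → ℝ) :=
    fun b j => if h : π j = j then (if b ⟨j, h⟩ then 1 else 0) else a (π j) j with hψ
  apply Set.Finite.subset (Set.finite_range ψ)
  rintro γ ⟨hcube, hfix, hmove⟩
  refine ⟨fun i => if γ i.1 = 1 then true else false, ?_⟩
  funext j
  rw [hψ]
  by_cases h : π j = j
  · simp only [h, dif_pos]
    rcases hfix j h with h0 | h1
    · norm_num [h0]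
    · norm_num [h1]
  · simp only [h, dif_neg, not_false_iff]
    exact (hmove j h).symm

lemma EC_ncard_le (π : Equiv.Perm (Fin m)) : (ECset a π).ncard ≤ 2 ^ fixedCard π := by
  classical
  set ψ : ({i : Fin m // π i = i} → Bool) → (Fin m → ℝ) :=
    fun b j => if h : π j = j then (if b ⟨j, h⟩ then 1 else 0) else a (π j) j with hψ
  have hsub : ECset a π ⊆ Set.range ψ := by
    rintro γ ⟨hcube, hfix, hmove⟩
    refine ⟨fun i => if γ i.1 = 1 then true else false, ?_⟩
    funext j
    rw [hψ]
    by_cases h : π j = j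
    · simp only [h, dif_pos]
      rcases hfix j h with h0 | h1
      · norm_num [h0]
      · norm_num [h1]
    · simp only [h, dif_neg, not_false_iff]
      exact (hmove j h).symm
  calc (ECset a π).ncard ≤ (Set.range ψ).ncard :=
        Set.ncard_le_ncard hsub (Set.finite_range ψ)
    _ ≤ 2 ^ fixedCard π := by
        rw [← Set.image_univ]
        refine le_trans (Set.ncard_image_le Set.finite_univ) ?_
        rw [Set.ncard_univ, Nat.card_eq_fintype_card, Fintype.card_fun]
        simp [fixedCard, Fintype.card_subtype]

/-- The bound on the number of Nash equilibria in EC(π). -/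
lemma Nash_EC_ncard_le (ha : GoodCoef a) {π : Equiv.Perm (Fin m)}
    (hfp : 1 ≤ fixedCard π) :
    {γ ∈ ECset a π | IsNashP v a γ}.ncard ≤ 2 ^ (fixedCard π - 1) := by
  classical
  obtain ⟨i0, hi0mem⟩ := Finset.card_pos.mp hfp
  have hi0 : π i0 = i0 := (Finset.mem_filter.mp hi0mem).2
  set N : Set (Fin m → ℝ) := {γ ∈ ECset a π | IsNashP v a γ} with hN
  set flip : (Fin m → ℝ) → (Fin m → ℝ) :=
    fun γ => Function.update γ i0 (1 - γ i0) with hflip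
  have hflip_invol : Function.Involutive flip := by
    intro γ
    funext j
    by_cases h : j = i0
    · subst h; simp [hflip, Function.update]
    · simp [hflip, Function.update, h]
  have hflip_inj : Function.Injective flip := hflip_invol.injective
  have hflip_apply : ∀ γ j, j ≠ i0 → flip γ j = γ j := by
    intro γ j h; simp [hflip, Function.update, h]
  have hflip_i0 : ∀ γ, flip γ i0 = 1 - γ i0 := by
    intro γ; simp [hflip, Function.update]
  have hflipEC : ∀ γ ∈ ECset a π, flip γ ∈ ECset a π := by
    rintro γ ⟨hcube, hfix, hmove⟩
    refine ⟨?_, ?_, ?_⟩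
    · intro j
      by_cases h : j = i0
      · rw [h, hflip_i0]
        constructor <;> linarith [(hcube i0).1, (hcube i0).2]
      · rw [hflip_apply γ j h]; exact hcube j
    · intro i hi
      by_cases h : i = i0
      · rw [h, hflip_i0]
        rcases hfix i0 hi0 with h0 | h1
        · right; rw [h0]; ring
        · left; rw [h1]; ring
      · rw [hflip_apply γ i h]; exact hfix i hi
    · intro j hj
      have hji0 : j ≠ i0 := by
        intro h; subst h; exact hj hi0
      rw [hflip_apply γ j hji0]; exact hmove j hj
  have hlam_flip : ∀ γ : Fin m → ℝ, lamP v a i0 (flip γ) = lamP v a i0 γ := by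
    intro γ
    unfold lamP
    congr 1
    apply Finset.prod_congr rfl
    intro j hj
    rw [hflip_apply γ j (Finset.ne_of_mem_erase hj)]
  have hdisj : Disjoint N (flip '' N) := by
    rw [Set.disjoint_left]
    rintro γ hγN ⟨δ, hδN, hδγ⟩
    obtain ⟨hδEC, hδNash⟩ := hδN
    obtain ⟨hγEC, hγNash⟩ := hγN
    have hlamδ : lamP v a i0 δ ≠ 0 := lam_ne_zero ha hδEC hi0
    have hlameq : lamP v a i0 γ = lamP v a i0 δ := by
      rw [← hδγ]; exact hlam_flip δ
    rcases hδEC.2.1 i0 hi0 with h0 | h1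
    · have h1' : γ i0 = 1 := by rw [← hδγ, hflip_i0, h0]; ring
      have ha1 := hδNash.2.1 i0 h0
      have ha2 := hγNash.2.2 i0 h1'
      rw [hlameq] at ha2
      exact hlamδ (le_antisymm ha1 ha2)
    · have h0' : γ i0 = 0 := by rw [← hδγ, hflip_i0, h1]; ring
      have ha1 := hδNash.2.2 i0 h1
      have ha2 := hγNash.2.1 i0 h0'
      rw [hlameq] at ha2
      exact hlamδ (le_antisymm ha2 ha1)
  have hNsub : N ⊆ ECset a π := fun γ hγ => hγ.1
  have hNfin : N.Finite := (EC_finite π).subset hNsub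
  have hunion_sub : N ∪ flip '' N ⊆ ECset a π := by
    rintro γ (hγ | ⟨δ, hδ, rfl⟩)
    · exact hNsub hγ
    · exact hflipEC δ (hNsub hδ)
  have hcard : N.ncard + (flip '' N).ncard ≤ 2 ^ fixedCard π := by
    rw [← Set.ncard_union_eq hdisj hNfin (hNfin.image flip)]
    exact le_trans (Set.ncard_le_ncard hunion_sub (EC_finite π)) (EC_ncard_le π)
  rw [Set.ncard_image_of_injective N hflip_inj] at hcard
  have h2 : 2 * N.ncard ≤ 2 * 2 ^ (fixedCard π - 1) := by
    have : 2 * 2 ^ (fixedCard π - 1) = 2 ^ fixedCard π := by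
      rw [← pow_succ']
      congr 1
      omega
    omega
  omega

/-- Counting permutations with a given fixed point set. -/
lemma card_perm_fixed_eq (S : Finset (Fin m)) :
    (Finset.univ.filter fun π : Equiv.Perm (Fin m) =>
      (Finset.univ.filter fun i => π i = i) = S).card
      = numDerangements (m - S.card) := by
  classical
  have h1 : (Finset.univ.filter fun π : Equiv.Perm (Fin m) =>
      (Finset.univ.filter fun i => π i = i) = S).card
      = Fintype.card {π : Equiv.Perm (Fin m) //
          (Finset.univ.filter fun i => π i = i) = S} := (Fintype.card_subtype _).symm
  rw [h1]
  have e1 : {π : Equiv.Perm (Fin m) // (Finset.univ.filter fun i => π i = i) = S}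
      ≃ {π : Equiv.Perm (Fin m) // ∀ i, ¬(i ∉ S) ↔ i ∈ Function.fixedPoints π} := by
    apply Equiv.subtypeEquivRight
    intro π
    constructor
    · intro h i
      rw [not_not]
      rw [← h]
      simp [Function.mem_fixedPoints, Function.IsFixedPt]
    · intro h
      ext i
      simp only [Finset.mem_filter, Finset.mem_univ, true_and]
      have h2 := (h i).symm
      rw [not_not] at h2
      simpa [Function.mem_fixedPoints, Function.IsFixedPt] using h2
  rw [Fintype.card_congr e1]
  rw [Fintype.card_congr (derangements.subtypeEquiv (fun i : Fin m => i ∉ S)).symm]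
  rw [card_derangements_eq_numDerangements]
  congr 1
  rw [Fintype.card_subtype_compl]
  congr 1
  · exact Fintype.card_fin m
  · simp [Fintype.card_subtype]

/-- Counting permutations with exactly l fixed points. -/
lemma card_perm_fixedCard_eq (l : ℕ) :
    (Finset.univ.filter fun π : Equiv.Perm (Fin m) => fixedCard π = l).card
      = Nat.choose m l * numDerangements (m - l) := by
  classical
  have hsplit : (Finset.univ.filter fun π : Equiv.Perm (Fin m) => fixedCard π = l)
      = (Finset.powersetCard l (Finset.univ : Finset (Fin m))).biUnion
          (fun S => Finset.univ.filter fun π : Equiv.Perm (Fin m) =>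
            (Finset.univ.filter fun i => π i = i) = S) := by
    ext π
    simp only [Finset.mem_filter, Finset.mem_univ, true_and, Finset.mem_biUnion,
      Finset.mem_powersetCard]
    constructor
    · intro h
      exact ⟨Finset.univ.filter fun i => π i = i,
        ⟨Finset.filter_subset _ _, h⟩, rfl⟩
    · rintro ⟨S, ⟨_, hcard⟩, rfl⟩
      exact hcard
  rw [hsplit, Finset.card_biUnion]
  · rw [Finset.sum_congr rfl (fun S hS => ?_)]
    · rw [Finset.sum_const, Finset.card_powersetCard, Finset.card_univ, Fintype.card_fin,
        smul_eq_mul]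
    · rw [card_perm_fixed_eq S]
      rw [(Finset.mem_powersetCard.mp hS).2]
  · intro S₁ _ S₂ _ hne
    rw [Function.onFun, Finset.disjoint_left]
    intro π h₁ h₂
    apply hne
    rw [← (Finset.mem_filter.mp h₁).2, ← (Finset.mem_filter.mp h₂).2]

end Aux

/-- For `1 ≤ l ≤ m`, the number of Nash equilibria with exactly `l`
coordinates in `{0,1}` is at most `binom(m,l)·2^{l−1}·!(m−l)`, with equality for a
maximal game. -/
theorem stmt17 {m : ℕ} (hm : 1 ≤ m) (v : Fin m → ℕ) (hv : ∀ i, v i ≤ 1)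
    (a : Fin m → Fin m → ℝ) (ha : GoodCoef a) (l : ℕ) (hl1 : 1 ≤ l) (hlm : l ≤ m) :
    {γ : Fin m → ℝ | IsNashP v a γ ∧
        (Finset.univ.filter fun i => γ i = 0 ∨ γ i = 1).card = l}.Finite ∧
    {γ : Fin m → ℝ | IsNashP v a γ ∧
        (Finset.univ.filter fun i => γ i = 0 ∨ γ i = 1).card = l}.ncard
      ≤ Nat.choose m l * 2 ^ (l - 1) * numDerangements (m - l) ∧
    (IsMaximal v a →
      {γ : Fin m → ℝ | IsNashP v a γ ∧
          (Finset.univ.filter fun i => γ i = 0 ∨ γ i = 1).card = l}.ncard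
        = Nat.choose m l * 2 ^ (l - 1) * numDerangements (m - l)) := by
  classical
  set S : Set (Fin m → ℝ) := {γ : Fin m → ℝ | IsNashP v a γ ∧
      (Finset.univ.filter fun i => γ i = 0 ∨ γ i = 1).card = l} with hS
  set Pl : Finset (Equiv.Perm (Fin m)) :=
    Finset.univ.filter (fun π => fixedCard π = l) with hPl
  set N : Equiv.Perm (Fin m) → Set (Fin m → ℝ) :=
    fun π => {γ ∈ ECset a π | IsNashP v a γ} with hNdef
  have hNfin : ∀ π, (N π).Finite := fun π => (EC_finite π).subset (fun γ hγ => hγ.1)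
  have hSdecomp : S = ⋃ π ∈ Pl, N π := by
    ext γ
    simp only [hS, Set.mem_setOf_eq, Set.mem_iUnion, exists_prop]
    constructor
    · rintro ⟨hNash, hcard⟩
      obtain ⟨π, hπ⟩ := exists_EC ha hNash.1
      refine ⟨π, ?_, hπ, hNash⟩
      rw [hPl, Finset.mem_filter]
      refine ⟨Finset.mem_univ _, ?_⟩
      rw [fixedCard, ← EC_binary_eq_fixed ha hπ, hcard]
    · rintro ⟨π, hπPl, hγEC, hNash⟩
      refine ⟨hNash, ?_⟩
      rw [EC_binary_eq_fixed ha hγEC]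
      exact (Finset.mem_filter.mp hπPl).2
  have hPairwise : ∀ π₁ ∈ Pl, ∀ π₂ ∈ Pl, π₁ ≠ π₂ → Disjoint (N π₁) (N π₂) := by
    intro π₁ _ π₂ _ hne
    rw [Set.disjoint_left]
    rintro γ ⟨h₁, _⟩ ⟨h₂, _⟩
    exact hne (EC_unique ha h₁ h₂)
  -- turn into Finsets
  set Nfin : Equiv.Perm (Fin m) → Finset (Fin m → ℝ) :=
    fun π => (hNfin π).toFinset with hNfindef
  have hNfin_coe : ∀ π, ↑(Nfin π) = N π := fun π => (hNfin π).coe_toFinset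
  have hSfin : S = ↑(Pl.biUnion Nfin) := by
    rw [hSdecomp]
    ext γ
    simp only [Set.mem_iUnion, exists_prop, Finset.coe_biUnion, Finset.mem_coe,
      Set.mem_iUnion, exists_prop]
    constructor
    · rintro ⟨π, h1, h2⟩
      exact ⟨π, h1, by rw [← hNfin_coe π] at h2; exact h2⟩
    · rintro ⟨π, h1, h2⟩
      exact ⟨π, h1, by rw [← hNfin_coe π]; exact h2⟩
  have hdisj : ∀ π₁ ∈ Pl, ∀ π₂ ∈ Pl, π₁ ≠ π₂ → Disjoint (Nfin π₁) (Nfin π₂) := by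
    intro π₁ h1 π₂ h2 hne
    rw [Finset.disjoint_left]
    intro γ hγ1 hγ2
    have := hPairwise π₁ h1 π₂ h2 hne
    rw [Set.disjoint_left] at this
    exact this ((hNfin π₁).mem_toFinset.mp hγ1) ((hNfin π₂).mem_toFinset.mp hγ2)
  have hSncard : S.ncard = ∑ π ∈ Pl, (Nfin π).card := by
    rw [hSfin, Set.ncard_coe_finset, Finset.card_biUnion hdisj]
  have hNcard_eq : ∀ π, (Nfin π).card = (N π).ncard := by
    intro π
    rw [← Set.ncard_coe_finset, hNfin_coe]
  have hPlcard : Pl.card = Nat.choose m l * numDerangements (m - l) :=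
    card_perm_fixedCard_eq l
  have hfinS : S.Finite := by
    rw [hSfin]; exact Finset.finite_toSet _
  have hfp : ∀ π ∈ Pl, 1 ≤ fixedCard π := by
    intro π hπ
    rw [(Finset.mem_filter.mp hπ).2]
    exact hl1
  refine ⟨hfinS, ?_, ?_⟩
  · rw [hSncard]
    calc ∑ π ∈ Pl, (Nfin π).card ≤ ∑ _π ∈ Pl, 2 ^ (l - 1) := by
          apply Finset.sum_le_sum
          intro π hπ
          rw [hNcard_eq π]
          have := Nash_EC_ncard_le (v := v) ha (hfp π hπ)
          rwa [(Finset.mem_filter.mp hπ).2] at this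
      _ = Nat.choose m l * 2 ^ (l - 1) * numDerangements (m - l) := by
          rw [Finset.sum_const, smul_eq_mul, hPlcard]
          ring
  · intro hmax
    rw [hSncard]
    calc ∑ π ∈ Pl, (Nfin π).card = ∑ _π ∈ Pl, 2 ^ (l - 1) := by
          apply Finset.sum_congr rfl
          intro π hπ
          rw [hNcard_eq π]
          have hex : ∃ i, π i = i := by
            have := hfp π hπ
            obtain ⟨i, hi⟩ := Finset.card_pos.mp this
            exact ⟨i, (Finset.mem_filter.mp hi).2⟩
          have := hmax π hex
          rw [hNdef, this, (Finset.mem_filter.mp hπ).2]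
      _ = Nat.choose m l * 2 ^ (l - 1) * numDerangements (m - l) := by
          rw [Finset.sum_const, smul_eq_mul, hPlcard]
          ring
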